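/- Define R(n,p) = ∑_{s=1}^{n} C(n,s)·2^{−n}·min(1, n·(1−p)^{s−1}). For every fixed ε > 0 there exist constants C, c > 0 such that for all sufficiently large n, setting p = (2+ε)·(log n)/n, one has R(n,p) ≤ C·n^{−ε/4} + C·e^{−c·n}. -/

import Mathlib

/-- `R(n,p) = ∑_{s=1}^n C(n,s) 2^{-n} min(1, n(1-p)^{s-1})`. -/
noncomputable def Rfun (n : ℕ) (p : ℝ) : ℝ :=
  ∑ s ∈ Finset.Icc 1 n,
    (n.choose s : ℝ) / 2 ^ n * min 1 ((n : ℝ) * (1 - p) ^ (s - 1))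

set_option maxHeartbeats 1000000 in
/-- For every `ε > 0` there are constants `C, c > 0` such that for all sufficiently
large `n`, with `p = (2+ε) log n / n`, `R(n,p) ≤ C n^{-ε/4} + C e^{-c n}`. -/
theorem stmt18 (ε : ℝ) (hε : 0 < ε) :
    ∃ C c : ℝ, 0 < C ∧ 0 < c ∧ ∃ N : ℕ, ∀ n : ℕ, N ≤ n →
      Rfun n ((2 + ε) * Real.log n / n) ≤
        C * (n : ℝ) ^ (-(ε / 4)) + C * Real.exp (-(c * n)) := by
  have hε2 : (0:ℝ) < 2 + ε := by linarith
  obtain ⟨δ, hδdef⟩ : ∃ δ : ℝ, δ = ε / (4 * (2 + ε)) := ⟨_, rfl⟩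
  have hδpos : 0 < δ := by rw [hδdef]; positivity
  have hδhalf : δ < 1/2 := by
    rw [hδdef, div_lt_iff₀ (by positivity)]; nlinarith
  obtain ⟨α, hαdef⟩ : ∃ α : ℝ, α = 1/2 - δ := ⟨_, rfl⟩
  have hα0 : 0 < α := by rw [hαdef]; linarith
  have hα1 : α ≤ 1 := by rw [hαdef]; linarith
  have hαval : (2 + ε) * α = 1 + ε/4 := by
    rw [hαdef, hδdef]; field_simp; ring
  obtain ⟨t, htdef⟩ : ∃ t : ℝ, t = 4 * δ := ⟨_, rfl⟩
  have ht0 : 0 < t := by rw [htdef]; positivity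
  refine ⟨3, 2 * δ^2, by norm_num, by positivity, ?_⟩
  -- choose N so that `(2+ε) log n / n ≤ 1` and `n ≥ 1`
  have hlog : Filter.Tendsto (fun x : ℝ => Real.log x / x) Filter.atTop (nhds 0) := by
    have := Real.tendsto_pow_log_div_mul_add_atTop 1 0 1 one_ne_zero
    simpa using this
  have hlogN : Filter.Tendsto (fun n : ℕ => Real.log n / n) Filter.atTop (nhds 0) :=
    hlog.comp tendsto_natCast_atTop_atTop
  have hev : ∀ᶠ n : ℕ in Filter.atTop, Real.log n / n < 1 / (2 + ε) :=
    hlogN.eventually_lt_const (by positivity)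
  obtain ⟨N₀, hN₀⟩ := Filter.eventually_atTop.mp hev
  refine ⟨max N₀ 1, fun n hn => ?_⟩
  have hn1 : 1 ≤ n := le_trans (le_max_right _ _) hn
  have hn0 : (0:ℝ) < n := by exact_mod_cast Nat.lt_of_lt_of_le Nat.zero_lt_one hn1
  have hlogn : 0 ≤ Real.log n := Real.log_natCast_nonneg n
  obtain ⟨p, hpdef⟩ : ∃ p : ℝ, p = (2 + ε) * Real.log n / n := ⟨_, rfl⟩
  have hp0 : 0 ≤ p := by rw [hpdef]; positivity
  rw [show (2 + ε) * Real.log n / n = p from hpdef.symm]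
  have hp1 : p ≤ 1 := by
    have h := hN₀ n (le_trans (le_max_left _ _) hn)
    have : (2 + ε) * (Real.log n / n) ≤ (2 + ε) * (1 / (2 + ε)) :=
      mul_le_mul_of_nonneg_left h.le (by linarith)
    rw [hpdef, mul_div_assoc]
    calc (2 + ε) * (Real.log n / n) ≤ (2 + ε) * (1 / (2 + ε)) := this
      _ = 1 := by field_simp
  have h1p0 : 0 ≤ 1 - p := by linarith
  obtain ⟨m, hmdef⟩ : ∃ m : ℕ, m = ⌊α * (n:ℝ)⌋₊ := ⟨_, rfl⟩
  have hmn : m ≤ n := by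
    have h : α * n ≤ n := by nlinarith
    rw [hmdef]
    calc ⌊α * (n:ℝ)⌋₊ ≤ ⌊(n:ℝ)⌋₊ := Nat.floor_le_floor h
      _ = n := Nat.floor_natCast n
  have hmα : (m:ℝ) ≤ α * n := by rw [hmdef]; exact Nat.floor_le (by positivity)
  have hαm : α * n - 1 ≤ (m:ℝ) := by
    rw [hmdef]
    have := Nat.lt_floor_add_one (α * (n:ℝ)); linarith
  -- split the sum at m
  set f : ℕ → ℝ := fun s => (n.choose s : ℝ) / 2 ^ n * min 1 ((n : ℝ) * (1 - p) ^ (s - 1))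
    with hfdef
  have hfnonneg : ∀ s, 0 ≤ f s := by
    intro s
    apply mul_nonneg (by positivity)
    exact le_min (by norm_num) (by positivity)
  have hsplit : Rfun n p = (∑ s ∈ Finset.Ioc 0 m, f s) + (∑ s ∈ Finset.Ioc m n, f s) := by
    rw [Rfun, show Finset.Icc 1 n = Finset.Ioc 0 n from Finset.Icc_add_one_left_eq_Ioc 0 n]
    exact (Finset.sum_Ioc_consecutive f (Nat.zero_le m) hmn).symm
  -- key: sums of binomial/2^n over subsets of range (n+1) are ≤ 1
  have hbinsum : ∀ S : Finset ℕ, S ⊆ Finset.range (n+1) →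
      ∑ s ∈ S, (n.choose s : ℝ) / 2 ^ n ≤ 1 := by
    intro S hS
    have h1 : ∑ s ∈ S, (n.choose s : ℝ) ≤ ∑ s ∈ Finset.range (n+1), (n.choose s : ℝ) :=
      Finset.sum_le_sum_of_subset_of_nonneg hS (fun i _ _ => by positivity)
    have h2 : ∑ s ∈ Finset.range (n+1), (n.choose s : ℝ) = 2 ^ n := by
      rw [← Nat.cast_sum, Nat.sum_range_choose]; push_cast; ring
    rw [← Finset.sum_div, div_le_one (by positivity)]
    rw [h2] at h1; exact h1
  -- tail bound
  have hKey : (n:ℝ) * (1 - p) ^ m ≤ 3 * (n:ℝ) ^ (-(ε/4)) := by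
    have e1 : (1 - p) ^ m ≤ Real.exp (-(p * m)) := by
      calc (1 - p) ^ m ≤ (Real.exp (-p)) ^ m := by
            apply pow_le_pow_left₀ h1p0
            have := Real.add_one_le_exp (-p); linarith
        _ = Real.exp (-(p * m)) := by
            rw [← Real.exp_nat_mul]; ring_nf
    have e2 : Real.exp (-(p * m)) ≤ Real.exp p * Real.exp (-((1 + ε/4) * Real.log n)) := by
      rw [← Real.exp_add]
      apply Real.exp_le_exp.mpr
      have hpm : p * (α * n - 1) ≤ p * m := mul_le_mul_of_nonneg_left hαm hp0
      have hpn : p * (α * n) = (1 + ε/4) * Real.log n := by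
        have h : p * (α * n) = ((2 + ε) * α) * Real.log n := by
          rw [hpdef]; field_simp
        rw [h, hαval]
      calc -(p * (m:ℝ)) ≤ -(p * (α * n - 1)) := neg_le_neg hpm
        _ = p + -((1 + ε/4) * Real.log n) := by rw [← hpn]; ring
    have e3 : Real.exp (-((1 + ε/4) * Real.log n)) = (n:ℝ) ^ (-(1 + ε/4)) := by
      rw [Real.rpow_def_of_pos hn0]; ring_nf
    have e4 : (n:ℝ) * (n:ℝ) ^ (-(1 + ε/4)) = (n:ℝ) ^ (-(ε/4)) := by
      have h := Real.rpow_add hn0 1 (-(1 + ε/4))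
      rw [Real.rpow_one] at h
      rw [← h]
      congr 1
      ring
    have e5 : Real.exp p ≤ 3 := by
      calc Real.exp p ≤ Real.exp 1 := Real.exp_le_exp.mpr hp1
        _ ≤ 3 := by have := Real.exp_one_lt_d9; linarith
    calc (n:ℝ) * (1 - p) ^ m ≤ (n:ℝ) * (Real.exp p * Real.exp (-((1 + ε/4) * Real.log n))) := by
          apply mul_le_mul_of_nonneg_left _ hn0.le
          exact le_trans e1 e2
      _ = Real.exp p * ((n:ℝ) * (n:ℝ) ^ (-(1 + ε/4))) := by rw [e3]; ring
      _ = Real.exp p * (n:ℝ) ^ (-(ε/4)) := by rw [e4]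
      _ ≤ 3 * (n:ℝ) ^ (-(ε/4)) := by
          apply mul_le_mul_of_nonneg_right e5 (by positivity)
  have htail : ∑ s ∈ Finset.Ioc m n, f s ≤ 3 * (n:ℝ) ^ (-(ε/4)) := by
    have hterm : ∀ s ∈ Finset.Ioc m n, f s ≤ (n.choose s : ℝ) / 2 ^ n * ((n:ℝ) * (1 - p) ^ m) := by
      intro s hs
      simp only [Finset.mem_Ioc] at hs
      apply mul_le_mul_of_nonneg_left _ (by positivity)
      calc min 1 ((n : ℝ) * (1 - p) ^ (s - 1)) ≤ (n : ℝ) * (1 - p) ^ (s - 1) := min_le_right _ _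
        _ ≤ (n:ℝ) * (1 - p) ^ m := by
            apply mul_le_mul_of_nonneg_left _ hn0.le
            exact pow_le_pow_of_le_one h1p0 (by linarith) (by omega)
    calc ∑ s ∈ Finset.Ioc m n, f s ≤
          ∑ s ∈ Finset.Ioc m n, (n.choose s : ℝ) / 2 ^ n * ((n:ℝ) * (1 - p) ^ m) :=
          Finset.sum_le_sum hterm
      _ = (∑ s ∈ Finset.Ioc m n, (n.choose s : ℝ) / 2 ^ n) * ((n:ℝ) * (1 - p) ^ m) :=
          (Finset.sum_mul _ _ _).symm
      _ ≤ 1 * ((n:ℝ) * (1 - p) ^ m) := by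
          apply mul_le_mul_of_nonneg_right _ (by positivity)
          apply hbinsum
          intro x hx
          simp only [Finset.mem_Ioc] at hx
          simp only [Finset.mem_range]; omega
      _ = (n:ℝ) * (1 - p) ^ m := one_mul _
      _ ≤ 3 * (n:ℝ) ^ (-(ε/4)) := hKey
  -- head bound
  obtain ⟨q, hqdef⟩ : ∃ q : ℝ, q = (Real.exp (-t) + 1) / 2 := ⟨_, rfl⟩
  have hq0 : 0 < q := by rw [hqdef]; positivity
  have hlogq : Real.log q ≤ -(t/2) + t^2/8 := by
    have hcosh : q = Real.exp (-(t/2)) * Real.cosh (t/2) := by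
      have e1 : Real.exp (-(t/2)) * Real.exp (t/2) = 1 := by
        rw [← Real.exp_add]; simp
      have e2 : Real.exp (-(t/2)) * Real.exp (-(t/2)) = Real.exp (-t) := by
        rw [← Real.exp_add]; ring_nf
      calc q = (Real.exp (-(t/2)) * Real.exp (-(t/2)) + Real.exp (-(t/2)) * Real.exp (t/2)) / 2 := by
            rw [hqdef, e1, e2]
        _ = Real.exp (-(t/2)) * Real.cosh (t/2) := by rw [Real.cosh_eq]; ring
    have hc : Real.cosh (t/2) ≤ Real.exp ((t/2)^2/2) := Real.cosh_le_exp_half_sq (t/2)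
    have : q ≤ Real.exp (-(t/2) + t^2/8) := by
      rw [hcosh, Real.exp_add]
      apply mul_le_mul_of_nonneg_left _ (Real.exp_nonneg _)
      calc Real.cosh (t/2) ≤ Real.exp ((t/2)^2/2) := hc
        _ = Real.exp (t^2/8) := by ring_nf
    calc Real.log q ≤ Real.log (Real.exp (-(t/2) + t^2/8)) :=
          Real.log_le_log hq0 this
      _ = -(t/2) + t^2/8 := Real.log_exp _
  have hexpon : t * α + Real.log q ≤ -(2 * δ^2) := by
    have : t * α + (-(t/2) + t^2/8) = -(2 * δ^2) := by
      rw [htdef, hαdef]; ring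
    linarith
  have hhead : ∑ s ∈ Finset.Ioc 0 m, f s ≤ Real.exp (-(2 * δ^2 * n)) := by
    have hterm : ∀ s ∈ Finset.Ioc 0 m, f s ≤
        Real.exp (t * m) / 2 ^ n * ((Real.exp (-t)) ^ s * 1 ^ (n - s) * (n.choose s : ℝ)) := by
      intro s hs
      simp only [Finset.mem_Ioc] at hs
      have hsm : (s:ℝ) ≤ m := by exact_mod_cast hs.2
      have h1 : min 1 ((n : ℝ) * (1 - p) ^ (s - 1)) ≤ 1 := min_le_left _ _
      have h2 : (1:ℝ) ≤ Real.exp (t * m) * (Real.exp (-t)) ^ s := by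
        rw [← Real.exp_nat_mul, ← Real.exp_add, ← Real.exp_zero]
        apply Real.exp_le_exp.mpr
        nlinarith [mul_le_mul_of_nonneg_left hsm ht0.le]
      calc f s ≤ (n.choose s : ℝ) / 2 ^ n * 1 :=
            mul_le_mul_of_nonneg_left h1 (by positivity)
        _ ≤ (n.choose s : ℝ) / 2 ^ n * (Real.exp (t * m) * (Real.exp (-t)) ^ s) :=
            mul_le_mul_of_nonneg_left h2 (by positivity)
        _ = Real.exp (t * m) / 2 ^ n * ((Real.exp (-t)) ^ s * 1 ^ (n - s) * (n.choose s : ℝ)) := by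
            rw [one_pow]; ring
    have hbin : ∑ s ∈ Finset.range (n+1), (Real.exp (-t)) ^ s * 1 ^ (n - s) * (n.choose s : ℝ)
        = (Real.exp (-t) + 1) ^ n := by
      rw [add_pow]
    calc ∑ s ∈ Finset.Ioc 0 m, f s
        ≤ ∑ s ∈ Finset.Ioc 0 m,
            Real.exp (t * m) / 2 ^ n * ((Real.exp (-t)) ^ s * 1 ^ (n - s) * (n.choose s : ℝ)) :=
          Finset.sum_le_sum hterm
      _ = Real.exp (t * m) / 2 ^ n *
            ∑ s ∈ Finset.Ioc 0 m, (Real.exp (-t)) ^ s * 1 ^ (n - s) * (n.choose s : ℝ) :=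
          (Finset.mul_sum _ _ _).symm
      _ ≤ Real.exp (t * m) / 2 ^ n *
            ∑ s ∈ Finset.range (n+1), (Real.exp (-t)) ^ s * 1 ^ (n - s) * (n.choose s : ℝ) := by
          apply mul_le_mul_of_nonneg_left _ (by positivity)
          apply Finset.sum_le_sum_of_subset_of_nonneg
          · intro x hx
            simp only [Finset.mem_Ioc] at hx
            simp only [Finset.mem_range]; omega
          · intro i _ _; positivity
      _ = Real.exp (t * m) / 2 ^ n * (Real.exp (-t) + 1) ^ n := by rw [hbin]
      _ = Real.exp (t * m) * q ^ n := by
          rw [hqdef, div_pow]; ring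
      _ = Real.exp (t * m) * Real.exp (n * Real.log q) := by
          rw [Real.exp_nat_mul, Real.exp_log hq0]
      _ = Real.exp (t * m + n * Real.log q) := (Real.exp_add _ _).symm
      _ ≤ Real.exp (-(2 * δ^2 * n)) := by
          apply Real.exp_le_exp.mpr
          have h1 : t * m ≤ t * (α * n) := mul_le_mul_of_nonneg_left hmα ht0.le
          have h2 : (n:ℝ) * (t * α + Real.log q) ≤ (n:ℝ) * (-(2 * δ^2)) :=
            mul_le_mul_of_nonneg_left hexpon hn0.le
          nlinarith [h1, h2]
  rw [hsplit]
  have : (3:ℝ) * Real.exp (-(2 * δ^2 * n)) ≥ Real.exp (-(2 * δ^2 * n)) := by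
    nlinarith [Real.exp_pos (-(2 * δ^2 * n))]
  linarith [htail, hhead]
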